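/- Let D = diag(d₁,…,d_g) be a polarization type. Then every matrix M ∈ Sp(2g,ℤ) with M ≡ I_{2g} (mod 2d_g²) belongs to G_D(D)₀; that is, Γ_g(2d_g²) ⊆ G_D(D)₀. Consequently, G_D(D)₀ is a finite index subgroup of Sp(2g,ℤ). -/

import Mathlib

open Matrix

/-- The integral symplectic group `Sp(2g,ℤ)`, realized as `(g ⊕ g) × (g ⊕ g)` matrices. -/
def SpZ (g : ℕ) : Set (Matrix (Fin g ⊕ Fin g) (Fin g ⊕ Fin g) ℤ) :=
  {M | M * Matrix.fromBlocks 0 1 (-1) 0 * M.transpose = Matrix.fromBlocks 0 1 (-1) 0}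

/-- The rational symplectic group `Sp(2g,ℚ)`. -/
def SpQ (g : ℕ) : Set (Matrix (Fin g ⊕ Fin g) (Fin g ⊕ Fin g) ℚ) :=
  {M | M * Matrix.fromBlocks 0 1 (-1) 0 * M.transpose = Matrix.fromBlocks 0 1 (-1) 0}

/-- The diagonal polarization matrix `D = diag(d₁,…,d_g)` over `ℚ`. -/
def Dmat (g : ℕ) (dvec : Fin g → ℤ) : Matrix (Fin g) (Fin g) ℚ :=
  Matrix.diagonal fun i => (dvec i : ℚ)

/-- `G_D = {M ∈ Sp(2g,ℚ) : diag(I,D)⁻¹ · M · diag(I,D) has integer entries}`. -/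
def GD (g : ℕ) (dvec : Fin g → ℤ) : Set (Matrix (Fin g ⊕ Fin g) (Fin g ⊕ Fin g) ℚ) :=
  {M | M ∈ SpQ g ∧ ∀ i j, ∃ z : ℤ,
    (((Matrix.fromBlocks 1 0 0 (Dmat g dvec))⁻¹ * M * Matrix.fromBlocks 1 0 0 (Dmat g dvec) :
      Matrix (Fin g ⊕ Fin g) (Fin g ⊕ Fin g) ℚ)) i j = (z : ℚ)}

/-- The subgroup `G_D(D)₀` of `G_D`: block matrices `(α β; γ δ) ∈ G_D` with
`α = I + Da`, `β = DbD`, `γ = c`, `δ = I + dD` for integer matrices `a,b,c,d`, and such that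
the diagonal entries of `D⁻¹α·ᵗβ·D⁻¹` and `γ·ᵗδ` are even integers. -/
def GDD0 (g : ℕ) (dvec : Fin g → ℤ) : Set (Matrix (Fin g ⊕ Fin g) (Fin g ⊕ Fin g) ℚ) :=
  {M | M ∈ GD g dvec ∧
    (∃ a b c d : Matrix (Fin g) (Fin g) ℤ,
      M.toBlocks₁₁ = 1 + Dmat g dvec * a.map (Int.cast : ℤ → ℚ) ∧
      M.toBlocks₁₂ = Dmat g dvec * b.map (Int.cast : ℤ → ℚ) * Dmat g dvec ∧
      M.toBlocks₂₁ = c.map (Int.cast : ℤ → ℚ) ∧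
      M.toBlocks₂₂ = 1 + d.map (Int.cast : ℤ → ℚ) * Dmat g dvec) ∧
    (∀ i, ∃ z : ℤ,
      ((Dmat g dvec)⁻¹ * M.toBlocks₁₁ * (M.toBlocks₁₂)ᵀ * (Dmat g dvec)⁻¹) i i
        = ((2 * z : ℤ) : ℚ)) ∧
    (∀ i, ∃ z : ℤ, (M.toBlocks₂₁ * (M.toBlocks₂₂)ᵀ) i i = ((2 * z : ℤ) : ℚ))}


open Matrix

private lemma castDivQ (x y : ℤ) (h : y ∣ x) : ((x / y : ℤ) : ℚ) = (x : ℚ) / (y : ℚ) := by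
  obtain ⟨k, rfl⟩ := h
  rcases eq_or_ne y 0 with rfl | hy
  · simp
  · rw [Int.mul_ediv_cancel_left _ hy]
    field_simp
    push_cast; ring

private lemma mapMulQ {ι : Type*} [Fintype ι] (X Y : Matrix ι ι ℤ) :
    (X * Y).map (Int.cast : ℤ → ℚ) = X.map (Int.cast : ℤ → ℚ) * Y.map (Int.cast : ℤ → ℚ) :=
  Matrix.map_mul (f := Int.castRingHom ℚ)

private lemma JJmul {g : ℕ} {R : Type*} [CommRing R] :
    (fromBlocks 0 1 (-1) 0 : Matrix (Fin g ⊕ Fin g) (Fin g ⊕ Fin g) R) *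
      fromBlocks 0 1 (-1) 0 = -1 := by
  rw [fromBlocks_multiply]
  ext i j
  rcases i with i | i <;> rcases j with j | j <;>
    simp [Matrix.one_apply, Matrix.neg_apply]

private lemma JTeq {g : ℕ} {R : Type*} [CommRing R] :
    (fromBlocks 0 1 (-1) 0 : Matrix (Fin g ⊕ Fin g) (Fin g ⊕ Fin g) R)ᵀ =
      -(fromBlocks 0 1 (-1) 0) := by
  ext i j
  rcases i with i | i <;> rcases j with j | j <;>
    simp [Matrix.one_apply, Matrix.neg_apply, Matrix.transpose_apply, eq_comm]

private lemma spz_one {g : ℕ} : (1 : Matrix (Fin g ⊕ Fin g) (Fin g ⊕ Fin g) ℤ) ∈ SpZ g := by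
  simp [SpZ]

private lemma spz_mul {g : ℕ} {M N : Matrix (Fin g ⊕ Fin g) (Fin g ⊕ Fin g) ℤ}
    (hM : M ∈ SpZ g) (hN : N ∈ SpZ g) : M * N ∈ SpZ g := by
  have hM' : M * fromBlocks 0 1 (-1) 0 * Mᵀ = fromBlocks 0 1 (-1) 0 := hM
  have hN' : N * fromBlocks 0 1 (-1) 0 * Nᵀ = fromBlocks 0 1 (-1) 0 := hN
  show M * N * fromBlocks 0 1 (-1) 0 * (M * N)ᵀ = fromBlocks 0 1 (-1) 0
  rw [transpose_mul]
  calc M * N * fromBlocks 0 1 (-1) 0 * (Nᵀ * Mᵀ)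
      = M * (N * fromBlocks 0 1 (-1) 0 * Nᵀ) * Mᵀ := by noncomm_ring
    _ = fromBlocks 0 1 (-1) 0 := by rw [hN', hM']

private lemma spz_rinv {g : ℕ} {M : Matrix (Fin g ⊕ Fin g) (Fin g ⊕ Fin g) ℤ}
    (hM : M ∈ SpZ g) :
    M * (fromBlocks 0 1 (-1) 0 * Mᵀ * -(fromBlocks 0 1 (-1) 0)) = 1 := by
  have hM' : M * fromBlocks 0 1 (-1) 0 * Mᵀ = fromBlocks 0 1 (-1) 0 := hM
  have h1 : M * (fromBlocks 0 1 (-1) 0 * Mᵀ * -(fromBlocks 0 1 (-1) 0)) =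
      (M * fromBlocks 0 1 (-1) 0 * Mᵀ) * -(fromBlocks 0 1 (-1) 0) := by noncomm_ring
  rw [h1, hM', mul_neg, JJmul, neg_neg]

private lemma spz_tJt {g : ℕ} {M : Matrix (Fin g ⊕ Fin g) (Fin g ⊕ Fin g) ℤ}
    (hM : M ∈ SpZ g) :
    Mᵀ * fromBlocks 0 1 (-1) 0 * M = fromBlocks 0 1 (-1) 0 := by
  set J : Matrix (Fin g ⊕ Fin g) (Fin g ⊕ Fin g) ℤ := fromBlocks 0 1 (-1) 0 with hJ
  have hl : (J * Mᵀ * -J) * M = 1 := mul_eq_one_comm.mp (spz_rinv hM)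
  have h4 : (-J) * ((J * Mᵀ * -J) * M) = (J * J) * (Mᵀ * J * M) := by noncomm_ring
  rw [hl, mul_one, hJ] at h4
  rw [JJmul] at h4
  rw [neg_one_mul] at h4
  exact (neg_inj.mp h4).symm

private lemma spz_inv_mem {g : ℕ} {M : Matrix (Fin g ⊕ Fin g) (Fin g ⊕ Fin g) ℤ}
    (hM : M ∈ SpZ g) :
    (fromBlocks 0 1 (-1) 0 * Mᵀ * -(fromBlocks 0 1 (-1) 0)) ∈ SpZ g := by
  set J : Matrix (Fin g ⊕ Fin g) (Fin g ⊕ Fin g) ℤ := fromBlocks 0 1 (-1) 0 with hJ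
  show (J * Mᵀ * -J) * J * (J * Mᵀ * -J)ᵀ = J
  have hRT : (J * Mᵀ * -J)ᵀ = J * (M * -J) := by
    rw [transpose_mul, transpose_mul, transpose_neg, transpose_transpose, hJ, JTeq]
    noncomm_ring
  rw [hRT]
  have step1 : (J * Mᵀ * -J) * J * (J * (M * -J)) =
      J * Mᵀ * (-(J * J * J)) * (M * -J) := by noncomm_ring
  rw [step1, hJ, JJmul, neg_one_mul, neg_neg]
  have step2 : (fromBlocks 0 1 (-1) 0 : Matrix (Fin g ⊕ Fin g) (Fin g ⊕ Fin g) ℤ) * Mᵀ *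
      (fromBlocks 0 1 (-1) 0) * (M * -(fromBlocks 0 1 (-1) 0)) =
      (fromBlocks 0 1 (-1) 0) * (Mᵀ * (fromBlocks 0 1 (-1) 0) * M) * -(fromBlocks 0 1 (-1) 0) := by
    noncomm_ring
  rw [step2, spz_tJt hM, mul_neg, JJmul, neg_one_mul, neg_neg]

private lemma part1 {g : ℕ} (hg : 1 ≤ g) (dvec : Fin g → ℤ) (hpos : ∀ i, 0 < dvec i)
    (hdvd : ∀ i j : Fin g, i ≤ j → dvec i ∣ dvec j)
    (M : Matrix (Fin g ⊕ Fin g) (Fin g ⊕ Fin g) ℤ) (hM : M ∈ SpZ g)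
    (hc : ∀ i j, (2 * dvec ⟨g - 1, Nat.sub_lt hg Nat.one_pos⟩ ^ 2) ∣ (M - 1) i j) :
    M.map (Int.cast : ℤ → ℚ) ∈ GDD0 g dvec := by
  classical
  have hgl : g - 1 < g := by omega
  set gl : Fin g := ⟨g - 1, hgl⟩ with hgldef
  set n : ℤ := 2 * dvec gl ^ 2 with hn
  have hc' : ∀ i j, n ∣ (M - 1) i j := hc
  have hdl : ∀ i, dvec i ∣ dvec gl := fun i => hdvd i gl (by
    rw [Fin.le_def]
    have := i.isLt
    simp only [hgldef]
    omega)
  have hdn : ∀ i, dvec i ∣ n := fun i => (hdl i).trans ⟨2 * dvec gl, by ring⟩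
  have hddn : ∀ i j, dvec i * dvec j ∣ n := fun i j =>
    (mul_dvd_mul (hdl i) (hdl j)).trans ⟨2, by ring⟩
  have hd2n : ∀ i, 2 * dvec i ^ 2 ∣ n := fun i =>
    mul_dvd_mul_left 2 (pow_dvd_pow_of_dvd (hdl i) 2)
  have hq0 : ∀ i, (dvec i : ℚ) ≠ 0 := fun i => Int.cast_ne_zero.mpr (hpos i).ne'
  -- entrywise congruence facts
  have hcA : ∀ i j : Fin g, n ∣ M (Sum.inl i) (Sum.inl j) - if i = j then 1 else 0 := by
    intro i j
    have h := hc' (Sum.inl i) (Sum.inl j)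
    simpa [Matrix.sub_apply, Matrix.one_apply, Sum.inl.injEq] using h
  have hcB : ∀ i j : Fin g, n ∣ M (Sum.inl i) (Sum.inr j) := by
    intro i j
    have h := hc' (Sum.inl i) (Sum.inr j)
    simpa [Matrix.sub_apply, Matrix.one_apply] using h
  have hcC : ∀ i j : Fin g, n ∣ M (Sum.inr i) (Sum.inl j) := by
    intro i j
    have h := hc' (Sum.inr i) (Sum.inl j)
    simpa [Matrix.sub_apply, Matrix.one_apply] using h
  have hcE : ∀ i j : Fin g, n ∣ M (Sum.inr i) (Sum.inr j) - if i = j then 1 else 0 := by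
    intro i j
    have h := hc' (Sum.inr i) (Sum.inr j)
    simpa [Matrix.sub_apply, Matrix.one_apply, Sum.inr.injEq] using h
  -- Sp over ℚ
  have hJmap : (Matrix.fromBlocks 0 1 (-1) 0 : Matrix (Fin g ⊕ Fin g) (Fin g ⊕ Fin g) ℤ).map
      (Int.cast : ℤ → ℚ) = Matrix.fromBlocks 0 1 (-1) 0 := by
    ext i j
    rcases i with i | i <;> rcases j with j | j <;>
      simp [Matrix.map_apply, Matrix.one_apply, Matrix.neg_apply, apply_ite]
  have hSpQ : M.map (Int.cast : ℤ → ℚ) ∈ SpQ g := by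
    have hM' : M * fromBlocks 0 1 (-1) 0 * Mᵀ = fromBlocks 0 1 (-1) 0 := hM
    show M.map (Int.cast : ℤ → ℚ) * fromBlocks 0 1 (-1) 0 *
        (M.map (Int.cast : ℤ → ℚ))ᵀ = fromBlocks 0 1 (-1) 0
    have h2 := congrArg (fun X : Matrix (Fin g ⊕ Fin g) (Fin g ⊕ Fin g) ℤ =>
      X.map (Int.cast : ℤ → ℚ)) hM'
    simp only [mapMulQ, Matrix.transpose_map, hJmap] at h2
    exact h2
  -- diagonal inverse facts
  have hDD' : Dmat g dvec * Matrix.diagonal (fun i => (dvec i : ℚ)⁻¹) = 1 := by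
    rw [Dmat, Matrix.diagonal_mul_diagonal]
    rw [show (fun i => (dvec i : ℚ) * (dvec i : ℚ)⁻¹) = fun _ => (1:ℚ) from
      funext fun i => mul_inv_cancel₀ (hq0 i)]
    exact Matrix.diagonal_one
  have hDinv : (Dmat g dvec)⁻¹ = Matrix.diagonal (fun i => (dvec i : ℚ)⁻¹) :=
    Matrix.inv_eq_right_inv hDD'
  have hDD : Dmat g dvec * (Dmat g dvec)⁻¹ = 1 := by rw [hDinv]; exact hDD'
  have hPinv : (Matrix.fromBlocks 1 0 0 (Dmat g dvec) :
      Matrix (Fin g ⊕ Fin g) (Fin g ⊕ Fin g) ℚ)⁻¹ =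
      Matrix.fromBlocks 1 0 0 (Dmat g dvec)⁻¹ := by
    apply Matrix.inv_eq_right_inv
    rw [Matrix.fromBlocks_multiply]
    simp [hDD, Matrix.fromBlocks_one]
  have hblockeq : (Matrix.fromBlocks 1 0 0 (Dmat g dvec))⁻¹ * M.map (Int.cast : ℤ → ℚ) *
      Matrix.fromBlocks 1 0 0 (Dmat g dvec) =
      Matrix.fromBlocks ((M.map (Int.cast : ℤ → ℚ)).toBlocks₁₁)
        ((M.map (Int.cast : ℤ → ℚ)).toBlocks₁₂ * Dmat g dvec)
        ((Dmat g dvec)⁻¹ * (M.map (Int.cast : ℤ → ℚ)).toBlocks₂₁)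
        ((Dmat g dvec)⁻¹ * (M.map (Int.cast : ℤ → ℚ)).toBlocks₂₂ * Dmat g dvec) := by
    rw [hPinv]
    conv_lhs => rw [← Matrix.fromBlocks_toBlocks (M.map (Int.cast : ℤ → ℚ))]
    rw [Matrix.fromBlocks_multiply, Matrix.fromBlocks_multiply]
    simp [Matrix.mul_assoc]
  have hGDint : ∀ i j, ∃ z : ℤ,
      (((Matrix.fromBlocks 1 0 0 (Dmat g dvec))⁻¹ * M.map (Int.cast : ℤ → ℚ) *
        Matrix.fromBlocks 1 0 0 (Dmat g dvec) :
        Matrix (Fin g ⊕ Fin g) (Fin g ⊕ Fin g) ℚ)) i j = (z : ℚ) := by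
    rw [hblockeq]
    intro i j
    rcases i with i | i <;> rcases j with j | j
    · refine ⟨M (Sum.inl i) (Sum.inl j), ?_⟩
      simp [Matrix.toBlocks₁₁, Matrix.map_apply]
    · refine ⟨M (Sum.inl i) (Sum.inr j) * dvec j, ?_⟩
      rw [Matrix.fromBlocks_apply₁₂, Dmat, Matrix.mul_diagonal]
      simp [Matrix.toBlocks₁₂, Matrix.map_apply]
    · refine ⟨M (Sum.inr i) (Sum.inl j) / dvec i, ?_⟩
      rw [Matrix.fromBlocks_apply₂₁, hDinv, Matrix.diagonal_mul,
        castDivQ _ _ ((hdn i).trans (hcC i j)), inv_mul_eq_div]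
      simp [Matrix.toBlocks₂₁, Matrix.map_apply]
    · refine ⟨(M (Sum.inr i) (Sum.inr j) * dvec j) / dvec i, ?_⟩
      have hdvd2 : dvec i ∣ M (Sum.inr i) (Sum.inr j) * dvec j := by
        have heq : M (Sum.inr i) (Sum.inr j) * dvec j =
            (M (Sum.inr i) (Sum.inr j) - if i = j then 1 else 0) * dvec j +
            (if i = j then 1 else 0) * dvec j := by ring
        rw [heq]
        refine dvd_add (Dvd.dvd.mul_right ((hdn i).trans (hcE i j)) _) ?_
        rcases eq_or_ne i j with rfl | hij
        · simp
        · simp [if_neg hij]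
      rw [Matrix.fromBlocks_apply₂₂, hDinv, Dmat, Matrix.mul_diagonal, Matrix.diagonal_mul,
        castDivQ _ _ hdvd2]
      push_cast
      field_simp [Matrix.toBlocks₂₂, Matrix.map_apply]
      rw [mul_comm]; rfl
  -- block structure
  have hblocks : ∃ a b c d : Matrix (Fin g) (Fin g) ℤ,
      (M.map (Int.cast : ℤ → ℚ)).toBlocks₁₁ = 1 + Dmat g dvec * a.map (Int.cast : ℤ → ℚ) ∧
      (M.map (Int.cast : ℤ → ℚ)).toBlocks₁₂ =
        Dmat g dvec * b.map (Int.cast : ℤ → ℚ) * Dmat g dvec ∧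
      (M.map (Int.cast : ℤ → ℚ)).toBlocks₂₁ = c.map (Int.cast : ℤ → ℚ) ∧
      (M.map (Int.cast : ℤ → ℚ)).toBlocks₂₂ = 1 + d.map (Int.cast : ℤ → ℚ) * Dmat g dvec := by
    refine ⟨Matrix.of fun i j => (M (Sum.inl i) (Sum.inl j) - if i = j then 1 else 0) / dvec i,
      Matrix.of fun i j => M (Sum.inl i) (Sum.inr j) / (dvec i * dvec j),
      Matrix.of fun i j => M (Sum.inr i) (Sum.inl j),
      Matrix.of fun i j => (M (Sum.inr i) (Sum.inr j) - if i = j then 1 else 0) / dvec j,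
      ?_, ?_, ?_, ?_⟩
    · ext i j
      simp only [Matrix.toBlocks₁₁, Matrix.of_apply, Matrix.map_apply, Matrix.add_apply,
        Matrix.one_apply, Dmat, Matrix.diagonal_mul]
      have h1 := Int.mul_ediv_cancel' ((hdn i).trans (hcA i j))
      have h2 : ((dvec i * ((M (Sum.inl i) (Sum.inl j) - if i = j then 1 else 0) / dvec i) :
          ℤ) : ℚ) = ((M (Sum.inl i) (Sum.inl j) - if i = j then 1 else 0 : ℤ) : ℚ) := by
        rw [h1]
      push_cast [apply_ite (Int.cast : ℤ → ℚ)] at h2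
      rcases eq_or_ne i j with rfl | hij
      · simp only [if_pos rfl] at h2 ⊢; linarith
      · simp only [if_neg hij] at h2 ⊢; linarith
    · ext i j
      simp only [Matrix.toBlocks₁₂, Matrix.of_apply, Matrix.map_apply, Dmat,
        Matrix.diagonal_mul, Matrix.mul_diagonal]
      have h1 := Int.mul_ediv_cancel' ((hddn i j).trans (hcB i j))
      have h2 : ((dvec i * dvec j * (M (Sum.inl i) (Sum.inr j) / (dvec i * dvec j)) : ℤ) : ℚ)
          = ((M (Sum.inl i) (Sum.inr j) : ℤ) : ℚ) := by rw [h1]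
      push_cast at h2
      linarith
    · ext i j
      simp [Matrix.toBlocks₂₁, Matrix.of_apply, Matrix.map_apply]
    · ext i j
      simp only [Matrix.toBlocks₂₂, Matrix.of_apply, Matrix.map_apply, Matrix.add_apply,
        Matrix.one_apply, Dmat, Matrix.mul_diagonal]
      have h1 := Int.ediv_mul_cancel ((hdn j).trans (hcE i j))
      have h2 : (((M (Sum.inr i) (Sum.inr j) - if i = j then 1 else 0) / dvec j * dvec j :
          ℤ) : ℚ) = ((M (Sum.inr i) (Sum.inr j) - if i = j then 1 else 0 : ℤ) : ℚ) := by
        rw [h1]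
      push_cast [apply_ite (Int.cast : ℤ → ℚ)] at h2
      rcases eq_or_ne i j with rfl | hij
      · simp only [if_pos rfl] at h2 ⊢; linarith
      · simp only [if_neg hij] at h2 ⊢; linarith
  -- parity conditions
  have hmap11 : (M.map (Int.cast : ℤ → ℚ)).toBlocks₁₁ =
      (M.toBlocks₁₁).map (Int.cast : ℤ → ℚ) := rfl
  have hmap12 : (M.map (Int.cast : ℤ → ℚ)).toBlocks₁₂ =
      (M.toBlocks₁₂).map (Int.cast : ℤ → ℚ) := rfl
  have hmap21 : (M.map (Int.cast : ℤ → ℚ)).toBlocks₂₁ =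
      (M.toBlocks₂₁).map (Int.cast : ℤ → ℚ) := rfl
  have hmap22 : (M.map (Int.cast : ℤ → ℚ)).toBlocks₂₂ =
      (M.toBlocks₂₂).map (Int.cast : ℤ → ℚ) := rfl
  have hpar1 : ∀ i, ∃ z : ℤ,
      ((Dmat g dvec)⁻¹ * (M.map (Int.cast : ℤ → ℚ)).toBlocks₁₁ *
        ((M.map (Int.cast : ℤ → ℚ)).toBlocks₁₂)ᵀ * (Dmat g dvec)⁻¹) i i = ((2 * z : ℤ) : ℚ) := by
    intro i
    have hW : 2 * dvec i ^ 2 ∣ (M.toBlocks₁₁ * (M.toBlocks₁₂)ᵀ) i i := by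
      rw [Matrix.mul_apply]
      refine Finset.dvd_sum fun k _ => ?_
      have : 2 * dvec i ^ 2 ∣ (M.toBlocks₁₂)ᵀ k i := (hd2n i).trans (hcB i k)
      exact this.mul_left _
    refine ⟨(M.toBlocks₁₁ * (M.toBlocks₁₂)ᵀ) i i / (2 * dvec i ^ 2), ?_⟩
    have h1 := Int.mul_ediv_cancel' hW
    rw [hmap11, hmap12, ← Matrix.transpose_map, hDinv, Matrix.mul_diagonal,
      Matrix.mul_assoc, ← mapMulQ, Matrix.diagonal_mul, Matrix.map_apply]
    have h2 : (((M.toBlocks₁₁ * (M.toBlocks₁₂)ᵀ) i i : ℤ) : ℚ) =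
        2 * (dvec i : ℚ) ^ 2 *
          (((M.toBlocks₁₁ * (M.toBlocks₁₂)ᵀ) i i / (2 * dvec i ^ 2) : ℤ) : ℚ) := by
      exact_mod_cast (congrArg (Int.cast : ℤ → ℚ) h1).symm
    have hd := hq0 i
    rw [h2]
    push_cast
    field_simp
  have hpar2 : ∀ i, ∃ z : ℤ, ((M.map (Int.cast : ℤ → ℚ)).toBlocks₂₁ *
      ((M.map (Int.cast : ℤ → ℚ)).toBlocks₂₂)ᵀ) i i = ((2 * z : ℤ) : ℚ) := by
    intro i
    have hW : 2 ∣ (M.toBlocks₂₁ * (M.toBlocks₂₂)ᵀ) i i := by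
      rw [Matrix.mul_apply]
      refine Finset.dvd_sum fun k _ => ?_
      have h2n : (2:ℤ) ∣ n := ⟨dvec gl ^ 2, rfl⟩
      have hC2 : (2:ℤ) ∣ M.toBlocks₂₁ i k := h2n.trans (hcC i k)
      exact hC2.mul_right _
    refine ⟨(M.toBlocks₂₁ * (M.toBlocks₂₂)ᵀ) i i / 2, ?_⟩
    rw [hmap21, hmap22, ← Matrix.transpose_map, ← mapMulQ, Matrix.map_apply,
      Int.mul_ediv_cancel' hW]
  exact ⟨⟨hSpQ, hGDint⟩, hblocks, hpar1, hpar2⟩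

/-- for a polarization type `D = diag(d₁,…,d_g)`, every `M ∈ Sp(2g,ℤ)` with
`M ≡ I (mod 2d_g²)` belongs to `G_D(D)₀`, i.e. `Γ_g(2d_g²) ⊆ G_D(D)₀`; consequently
`G_D(D)₀` has finite index in `Sp(2g,ℤ)`: finitely many cosets `γᵢ · G_D(D)₀` cover it. -/
theorem stmt_6 (g : ℕ) (hg : 1 ≤ g) (dvec : Fin g → ℤ) (hpos : ∀ i, 0 < dvec i)
    (hdvd : ∀ i j : Fin g, i ≤ j → dvec i ∣ dvec j) :
    (∀ M : Matrix (Fin g ⊕ Fin g) (Fin g ⊕ Fin g) ℤ, M ∈ SpZ g →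
      (∀ i j, (2 * dvec ⟨g - 1, by omega⟩ ^ 2) ∣
        (M - 1) i j) →
      M.map (Int.cast : ℤ → ℚ) ∈ GDD0 g dvec) ∧
    ∃ s : Finset (Matrix (Fin g ⊕ Fin g) (Fin g ⊕ Fin g) ℤ),
      (∀ γ ∈ s, γ ∈ SpZ g) ∧
      ∀ M ∈ SpZ g, ∃ γ ∈ s, ∃ N : Matrix (Fin g ⊕ Fin g) (Fin g ⊕ Fin g) ℤ,
        N.map (Int.cast : ℤ → ℚ) ∈ GDD0 g dvec ∧ M = γ * N := by
  classical
  have hgl : g - 1 < g := by omega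
  set gl : Fin g := ⟨g - 1, hgl⟩ with hgldef
  have hnpos : (0:ℤ) < 2 * dvec gl ^ 2 := by have := hpos gl; positivity
  constructor
  · intro M hM hcong
    exact part1 hg dvec hpos hdvd M hM hcong
  · set m : ℕ := (2 * dvec gl ^ 2).toNat with hmdef
    have hm0 : 0 < m := by omega
    have hmn : ((m : ℕ) : ℤ) = 2 * dvec gl ^ 2 := Int.toNat_of_nonneg hnpos.le
    set φ : Matrix (Fin g ⊕ Fin g) (Fin g ⊕ Fin g) ℤ →
        Matrix (Fin g ⊕ Fin g) (Fin g ⊕ Fin g) (ZMod m) :=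
      fun X => X.map (Int.cast : ℤ → ZMod m) with hφdef
    set f : Matrix (Fin g ⊕ Fin g) (Fin g ⊕ Fin g) (ZMod m) →
        Matrix (Fin g ⊕ Fin g) (Fin g ⊕ Fin g) ℤ :=
      fun t => if h : ∃ X, X ∈ SpZ g ∧ φ X = t then h.choose else 1 with hfdef
    haveI : NeZero m := ⟨hm0.ne'⟩
    refine ⟨Finset.univ.image f, ?_, ?_⟩
    · intro γ hγ
      obtain ⟨t, -, rfl⟩ := Finset.mem_image.mp hγ
      by_cases h : ∃ X, X ∈ SpZ g ∧ φ X = t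
      · simp only [hfdef, dif_pos h]
        exact h.choose_spec.1
      · simp only [hfdef, dif_neg h]
        exact spz_one
    · intro M hM
      have hex : ∃ X, X ∈ SpZ g ∧ φ X = φ M := ⟨M, hM, rfl⟩
      refine ⟨f (φ M), Finset.mem_image.mpr ⟨φ M, Finset.mem_univ _, rfl⟩, ?_⟩
      have hγ : f (φ M) ∈ SpZ g ∧ φ (f (φ M)) = φ M := by
        simp only [hfdef, dif_pos hex]
        exact hex.choose_spec
      set γ : Matrix (Fin g ⊕ Fin g) (Fin g ⊕ Fin g) ℤ := f (φ M) with hγdef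
      set R : Matrix (Fin g ⊕ Fin g) (Fin g ⊕ Fin g) ℤ :=
        fromBlocks 0 1 (-1) 0 * γᵀ * -(fromBlocks 0 1 (-1) 0) with hRdef
      have hγR : γ * R = 1 := spz_rinv hγ.1
      have hRγ : R * γ = 1 := mul_eq_one_comm.mp hγR
      refine ⟨R * M, ?_, ?_⟩
      · have hNsp : R * M ∈ SpZ g := spz_mul (spz_inv_mem hγ.1) hM
        refine part1 hg dvec hpos hdvd (R * M) hNsp ?_
        intro i j
        have hdiff : ∀ a b, (2 * dvec gl ^ 2) ∣ (M - γ) a b := by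
          intro a b
          have h := congrFun (congrFun (congrArg (fun X => X) hγ.2) a) b
          have h' : ((γ a b : ℤ) : ZMod m) = ((M a b : ℤ) : ZMod m) := by
            simpa [hφdef, Matrix.map_apply] using h
          rw [← hmn, ← ZMod.intCast_zmod_eq_zero_iff_dvd]
          push_cast [Matrix.sub_apply]
          rw [h']
          ring
        have hN1 : R * M - 1 = R * (M - γ) := by
          rw [Matrix.mul_sub, hRγ]
        rw [hN1, Matrix.mul_apply]
        exact Finset.dvd_sum fun k _ => (hdiff k j).mul_left _
      · rw [← Matrix.mul_assoc, hγR, one_mul]
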